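/- Let M be an admissible matroid on J, let L(M) be its lattice of flats ordered by inclusion (with bottom element the empty flat), and let μ denote the Möbius function of L(M). Then for every a ∈ J and every natural number k: the sum of μ(∅, F) over all admissible flats F of M of rank k with a ∈ F equals the sum of μ(∅, F) over all admissible flats F of M of rank k with a* ∈ F. -/

import Mathlib

open Set Matroid
open scoped Matroid

open scoped Classical

/-- The ground set `J = [n] ⊔ [n]*`: `Sum.inl` is `[n]`, `Sum.inr` is `[n]*`. -/
abbrev J (n : ℕ) := Fin n ⊕ Fin n

/-- The fixed-point-free involution `a ↦ a*` on `J n`. -/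
def sstar {n : ℕ} (a : J n) : J n := Sum.swap a

/-- `A* = {a* : a ∈ A}`. -/
def starSet {n : ℕ} (A : Set (J n)) : Set (J n) := sstar '' A

/-- `A` is admissible if `A ∩ A* = ∅`. -/
def Admissible {n : ℕ} (A : Set (J n)) : Prop := A ∩ starSet A = ∅

/-- `A` is totally inadmissible if `A* = A`. -/
def TotallyInadmissible {n : ℕ} (A : Set (J n)) : Prop := starSet A = A

/-- The rank of a set in a matroid (on a finite ground type). -/
noncomputable def Matroid.rSet {α : Type*} (M : Matroid α) (A : Set α) : ℕ :=
  sSup {k : ℕ | ∃ I, M.Indep I ∧ I ⊆ A ∧ I.ncard = k}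

/-- The rank of a matroid. -/
noncomputable def Matroid.rnk {α : Type*} (M : Matroid α) : ℕ := M.rSet M.E

/-- A loopless matroid: every singleton of the ground set is independent. -/
def Matroid.LooplessM {α : Type*} (M : Matroid α) : Prop := ∀ a ∈ M.E, M.Indep {a}

/-- `I^ad M`: the independent sets of `M` whose closure is admissible. -/
def Iad {n : ℕ} (M : Matroid (J n)) : Set (Set (J n)) :=
  {I | M.Indep I ∧ Admissible (M.closure I)}

/-- An admissible matroid on `J n`. -/
def IsAdmissibleMatroid {n : ℕ} (M : Matroid (J n)) : Prop :=
  M.E = Set.univ ∧ M.LooplessM ∧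
    ∀ A : Set (J n),
      M.rSet A = sSup {v : ℕ | ∃ I : Set (J n), M.Indep I ∧ Admissible I ∧ I ⊆ A ∧
        v = if ∃ a, a ∈ A ∧ sstar a ∈ A ∧ (I ∪ {a}) ∈ Iad M ∧ (I ∪ {sstar a}) ∈ Iad M
            then I.ncard + 2 else I.ncard}

/-- Strongly admissible sets with respect to `M`. -/
inductive StronglyAdmissible {n : ℕ} (M : Matroid (J n)) : Set (J n) → Prop
  | empty : StronglyAdmissible M ∅
  | insert {B : Set (J n)} {a : J n} : StronglyAdmissible M B →
      a ∉ M.closure B → sstar a ∉ M.closure B → StronglyAdmissible M (Insert.insert a B)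

/-- The Möbius function of a finite poset, valued in `ℤ`. -/
noncomputable def mob {α : Type*} [PartialOrder α] [Fintype α] (x y : α) : ℤ :=
  letI : DecidableEq α := Classical.decEq α
  letI : @DecidableRel α α (· < ·) := Classical.decRel _
  letI : @DecidableRel α α (· ≤ ·) := Classical.decRel _
  letI := Fintype.toLocallyFiniteOrder (α := α)
  IncidenceAlgebra.mu ℤ x y

/-- The lattice of flats of the ranked symplectic matroid associated to `M`:
admissible flats of `M` together with the ground set as top element. -/
abbrev LS {n : ℕ} (M : Matroid (J n)) :=
  {F : Set (J n) // (M.IsFlat F ∧ Admissible F) ∨ F = M.E}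

/-- The Möbius number `μ(S(M))` of the lattice of flats of the ranked symplectic matroid. -/
noncomputable def muS {n : ℕ} (M : Matroid (J n)) : ℤ :=
  if h : M.IsFlat ∅ ∧ Admissible (∅ : Set (J n)) then
    mob (⟨∅, Or.inl h⟩ : LS M) ⟨M.E, Or.inr rfl⟩
  else 0

/-- The Möbius function of the lattice of flats of `M`. -/
noncomputable def muFlats {n : ℕ} (M : Matroid (J n)) (F G : Set (J n)) : ℤ :=
  if h : M.IsFlat F ∧ M.IsFlat G then
    mob (⟨F, h.1⟩ : {X : Set (J n) // M.IsFlat X}) ⟨G, h.2⟩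
  else 0

/-- Matroid deletion. -/
def Matroid.del {α : Type*} (M : Matroid α) (D : Set α) : Matroid α := M ↾ (M.E \ D)

/-- Matroid contraction, via the dual. -/
def Matroid.con {α : Type*} (M : Matroid α) (C : Set α) : Matroid α := (M✶ ↾ (M✶.E \ C))✶

/-- A circuit: a minimal dependent subset of the ground set. -/
def Matroid.Circuit' {α : Type*} (M : Matroid α) (C : Set α) : Prop :=
  C ⊆ M.E ∧ ¬ M.Indep C ∧ ∀ D, D ⊂ C → M.Indep D

/-- Connectedness of a matroid: nonempty ground set and any two elements lie
in a common circuit. -/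
def Matroid.ConnectedM {α : Type*} (M : Matroid α) : Prop :=
  M.E.Nonempty ∧ ∀ a ∈ M.E, ∀ b ∈ M.E, a = b ∨ ∃ C, M.Circuit' C ∧ a ∈ C ∧ b ∈ C

/-- The 0/1-indicator vector of `B ⊆ J` in `ℝ^J`. -/
noncomputable def indic {n : ℕ} (B : Set (J n)) : J n → ℝ := fun a => if a ∈ B then 1 else 0

/-- The enveloping map `env : ℝ^J → ℝ^n`, `(env x)_i = x_i - x_{i*}`. -/
def envMap {n : ℕ} (x : J n → ℝ) : Fin n → ℝ := fun i => x (Sum.inl i) - x (Sum.inr i)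

/-- `e±_A ∈ ℝ^n`: `+1` on coordinates `i ∈ A`, `-1` on coordinates with `i* ∈ A`, `0` otherwise. -/
noncomputable def epm {n : ℕ} (A : Set (J n)) : Fin n → ℝ := envMap (indic A)

/-- The matroid polytope `P(S(M))` of the ranked symplectic matroid of `M`. -/
noncomputable def PolyS {n : ℕ} (M : Matroid (J n)) : Set (Fin n → ℝ) :=
  convexHull ℝ (epm '' {B | M.IsBase B ∧ Admissible B})

/-- The support of the Bergman fan of the ranked symplectic matroid of `M`. -/
def Berg {n : ℕ} (M : Matroid (J n)) : Set (Fin n → ℝ) :=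
  {ω | ∃ C : Finset (Set (J n)),
    (∀ F ∈ C, M.IsFlat F ∧ Admissible F ∧ F ≠ ∅) ∧
    (∀ F ∈ C, ∀ G ∈ C, F ⊆ G ∨ G ⊆ F) ∧
    ∃ a : Set (J n) → ℝ, (∀ F, 0 ≤ a F) ∧ ω = ∑ F ∈ C, a F • epm F}

/-- A maximal chain `F₁ ⊊ ⋯ ⊊ F_d` of proper flats of the lattice of flats of `S(M)`,
where `rank_M (F i) = i + 1`. -/
def IsFlagChain {n : ℕ} (M : Matroid (J n)) (d : ℕ) (F : Fin d → Set (J n)) : Prop :=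
  (∀ i, M.IsFlat (F i) ∧ Admissible (F i) ∧ M.rSet (F i) = (i : ℕ) + 1) ∧
    ∀ i j : Fin d, i < j → F i ⊂ F j

/-- A Minkowski weight of dimension `d` on the Bergman fan of `S(M)`. -/
def IsMinkowskiWeight {n : ℕ} (M : Matroid (J n)) (d : ℕ)
    (c : (Fin d → Set (J n)) → ℤ) : Prop :=
  ∀ (σ : Fin d → Set (J n)) (k : Fin d), IsFlagChain M d σ →
    (∑ G ∈ Finset.univ.filter
        (fun G : Set (J n) => IsFlagChain M d (Function.update σ k G)),
        (c (Function.update σ k G) : ℝ) • epm G)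
      ∈ Submodule.span ℝ {v : Fin n → ℝ | ∃ i : Fin d, i ≠ k ∧ v = epm (σ i)}

/-- The top (rank `d`) flat of a maximal chain. -/
def chainTop {n d : ℕ} (σ : Fin d → Set (J n)) : Set (J n) := ⋃ i, σ i

section Aux
variable {n : ℕ}

lemma sstar_sstar (a : J n) : sstar (sstar a) = a := Sum.swap_swap a

lemma sstar_ne (a : J n) : sstar a ≠ a := by
  cases a <;> simp [sstar, Sum.swap]

lemma mem_starSet {A : Set (J n)} {b : J n} : b ∈ starSet A ↔ sstar b ∈ A := by
  constructor
  · rintro ⟨c, hc, rfl⟩; rwa [sstar_sstar]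
  · intro h; exact ⟨sstar b, h, sstar_sstar b⟩

lemma adm_iff {A : Set (J n)} : Admissible A ↔ ∀ b ∈ A, sstar b ∉ A := by
  unfold Admissible
  rw [Set.eq_empty_iff_forall_notMem]
  constructor
  · intro h b hb hb'
    exact h b ⟨hb, mem_starSet.2 hb'⟩
  · rintro h b ⟨hb, hb'⟩
    exact h b hb (mem_starSet.1 hb')

lemma adm_subset {A B : Set (J n)} (h : A ⊆ B) (hB : Admissible B) : Admissible A := by
  rw [adm_iff] at *
  exact fun b hb hb' => hB b (h hb) (h hb')

lemma adm_empty : Admissible (∅ : Set (J n)) := by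
  rw [adm_iff]; simp


lemma bdd_aux {n : ℕ} (M : Matroid (J n)) (A : Set (J n)) :
    BddAbove {k : ℕ | ∃ I, M.Indep I ∧ I ⊆ A ∧ I.ncard = k} := by
  refine ⟨Fintype.card (J n) + 2, ?_⟩
  rintro k ⟨I, -, -, rfl⟩
  exact le_trans (Set.ncard_le_ncard (Set.subset_univ I) Set.finite_univ)
    (by simp [Set.ncard_univ])

variable {M : Matroid (J n)} (hE : M.E = Set.univ)

include hE

lemma le_rSet {I A : Set (J n)} (hI : M.Indep I) (hIA : I ⊆ A) : I.ncard ≤ M.rSet A := by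
  exact le_csSup (bdd_aux M A) ⟨I, hI, hIA, rfl⟩

lemma rSet_exists' (A : Set (J n)) : ∃ I, M.Indep I ∧ I ⊆ A ∧ I.ncard = M.rSet A := by
  have hne : {k : ℕ | ∃ I, M.Indep I ∧ I ⊆ A ∧ I.ncard = k}.Nonempty :=
    ⟨0, ∅, M.empty_indep, Set.empty_subset _, by simp⟩
  have := Nat.sSup_mem hne (bdd_aux M A)
  simpa [Matroid.rSet] using this

lemma spanning_of_ncard (A : Set (J n)) {I : Set (J n)} (hI : M.Indep I) (hIA : I ⊆ A)
    (hc : M.rSet A ≤ I.ncard) : A ⊆ M.closure I := by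
  by_contra h
  obtain ⟨c, hcA, hcI⟩ := Set.not_subset.1 h
  have hcI' : c ∉ I := fun h' => hcI (M.subset_closure I (by simp [hE]) h')
  have hins : M.Indep (insert c I) := by
    rw [hI.insert_indep_iff_of_notMem hcI']
    exact ⟨by simp [hE], hcI⟩
  have := le_rSet hE hins (Set.insert_subset hcA hIA)
  rw [Set.ncard_insert_of_notMem hcI' (Set.toFinite I)] at this
  omega

lemma rSet_exists (A : Set (J n)) :
    ∃ I, M.Indep I ∧ I ⊆ A ∧ I.ncard = M.rSet A ∧ A ⊆ M.closure I := by
  obtain ⟨I, hI, hIA, hc⟩ := rSet_exists' hE (M := M) A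
  exact ⟨I, hI, hIA, hc, spanning_of_ncard hE A hI hIA hc.ge⟩

lemma rSet_le_of_subset_closure {K A : Set (J n)} (hK : M.Indep K) (h : K ⊆ M.closure A) :
    K.ncard ≤ M.rSet A := by
  obtain ⟨I, hI, hIA, hc, hsp⟩ := rSet_exists hE (M := M) A
  have hclI : M.closure I = M.closure A := by
    refine subset_antisymm (M.closure_subset_closure hIA) ?_
    rw [← M.closure_closure I]
    exact M.closure_subset_closure hsp
  have hKc : K ⊆ M.closure I := hclI ▸ h
  obtain ⟨K', hK', hKK'⟩ := hK.subset_isBasis_of_subset hKc (M.closure_subset_ground I)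
  have hIb : M.IsBasis I (M.closure I) := hI.isBasis_closure
  have hcard : K'.encard = I.encard := hK'.encard_eq_encard hIb
  have : K'.ncard = I.ncard := by
    rw [Set.ncard_def, hcard, ← Set.ncard_def]
  calc K.ncard ≤ K'.ncard := Set.ncard_le_ncard hKK' (Set.toFinite K')
    _ = I.ncard := this
    _ ≤ M.rSet A := hc.le

lemma rSet_mono {A B : Set (J n)} (h : A ⊆ B) : M.rSet A ≤ M.rSet B := by
  obtain ⟨I, hI, hIA, hc⟩ := rSet_exists' hE (M := M) A
  rw [← hc]
  exact le_rSet hE hI (hIA.trans h)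

lemma rSet_closure (A : Set (J n)) : M.rSet (M.closure A) = M.rSet A := by
  refine le_antisymm ?_ (rSet_mono hE (M.subset_closure A (by simp [hE])))
  obtain ⟨I, hI, hIA, hc⟩ := rSet_exists' hE (M := M) (M.closure A)
  rw [← hc]
  exact rSet_le_of_subset_closure hE hI hIA

lemma rSet_insert {A : Set (J n)} {b : J n} (hb : b ∉ M.closure A) :
    M.rSet (insert b A) = M.rSet A + 1 := by
  obtain ⟨I, hI, hIA, hc, hsp⟩ := rSet_exists hE (M := M) A
  have hclI : M.closure I = M.closure A := by
    refine subset_antisymm (M.closure_subset_closure hIA) ?_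
    rw [← M.closure_closure I]
    exact M.closure_subset_closure hsp
  have hbI : b ∉ I := fun h => hb (hclI ▸ M.subset_closure I (by simp [hE]) h)
  have hins : M.Indep (insert b I) := by
    rw [hI.insert_indep_iff_of_notMem hbI]
    exact ⟨by simp [hE], hclI ▸ hb⟩
  refine le_antisymm ?_ ?_
  · obtain ⟨K, hK, hKA, hc'⟩ := rSet_exists' hE (M := M) (insert b A)
    rw [← hc']
    have h1 : K \ {b} ⊆ A := by
      intro y hy
      rcases hKA hy.1 with h | h
      · exact absurd h hy.2
      · exact h
    have h2 : (K \ {b}).ncard ≤ M.rSet A := le_rSet hE (hK.subset Set.diff_subset) h1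
    have h3 : K.ncard ≤ (K \ {b}).ncard + 1 := by
      have := Set.ncard_diff_singleton_add_one (s := K) (a := b)
      by_cases hbK : b ∈ K
      · rw [Set.ncard_diff_singleton_add_one hbK (Set.toFinite K)]
      · rw [Set.diff_singleton_eq_self hbK]; omega
    omega
  · have := le_rSet hE hins (Set.insert_subset_insert hIA)
    rwa [Set.ncard_insert_of_notMem hbI (Set.toFinite I), hc] at this

end Aux
section Star
set_option linter.unusedSectionVars false

lemma closure_flat' {α : Type*} (M : Matroid α) (X : Set α) : M.IsFlat (M.closure X) := by
  rw [Matroid.closure_def]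
  rw [Set.sInter_eq_iInter]
  haveI : Nonempty {F // F ∈ {F | M.IsFlat F ∧ X ∩ M.E ⊆ F}} :=
    ⟨⟨M.E, M.ground_isFlat, Set.inter_subset_right⟩⟩
  exact Matroid.IsFlat.iInter (fun F => F.2.1)

variable {n : ℕ} {M : Matroid (J n)}

lemma flat_empty (hM : IsAdmissibleMatroid M) : M.IsFlat (∅ : Set (J n)) := by
  obtain ⟨hE, hl, -⟩ := hM
  have h : M.closure (∅ : Set (J n)) = ∅ := by
    ext c
    simp only [Set.mem_empty_iff_false, iff_false]
    intro hc
    have hci : M.Indep {c} := hl c (by simp [hE])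
    rcases (M.empty_indep.mem_closure_iff (x := c)).1 hc with h | h
    · rw [← Set.singleton_def] at h
      exact h.not_indep hci
    · exact h
  rw [← h]
  exact closure_flat' M ∅

lemma subset_closure' (hE : M.E = Set.univ) (A : Set (J n)) : A ⊆ M.closure A :=
  M.subset_closure A (by simp [hE])

/-- The key exchange lemma: for a flat `x` with `a, a* ∉ x`, if `cl(x ∪ a)` is
admissible then so is `cl(x ∪ a*)`. -/
lemma star_lemma (hM : IsAdmissibleMatroid M) {x : Set (J n)} (hx : M.IsFlat x) {a : J n}
    (ha : a ∉ x) (ha' : sstar a ∉ x) (hG : Admissible (M.closure (insert a x))) :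
    Admissible (M.closure (insert (sstar a) x)) := by
  obtain ⟨hE, hl, hax⟩ := hM
  have hxcl : M.closure x = x := hx.closure
  obtain ⟨r, hr⟩ : ∃ r, r = M.rSet x := ⟨_, rfl⟩
  obtain ⟨A, hA⟩ : ∃ A : Set (J n), A = insert a (insert (sstar a) x) := ⟨_, rfl⟩
  have hmemA : ∀ y, y ∈ A ↔ (y = a ∨ y = sstar a ∨ y ∈ x) := by
    intro y; rw [hA]; simp [Set.mem_insert_iff]
  -- a* is not in cl(insert a x)
  have haG : a ∈ M.closure (insert a x) :=
    subset_closure' hE _ (Set.mem_insert a x)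
  have hasG : sstar a ∉ M.closure (insert a x) := fun h =>
    (adm_iff.1 hG) a haG h
  -- admissibility of x
  have hxadm : Admissible x :=
    adm_subset ((Set.subset_insert a x).trans (subset_closure' hE (insert a x))) hG
  -- rank of x with a or a* inserted
  have hra : M.rSet (insert a x) = r + 1 := by
    rw [rSet_insert hE (by rwa [hxcl]), ← hr]
  have hra' : M.rSet (insert (sstar a) x) = r + 1 := by
    rw [rSet_insert hE (by rwa [hxcl]), ← hr]
  -- rank of A is r + 2
  have hrA : M.rSet A = r + 2 := by
    refine le_antisymm ?_ ?_
    · obtain ⟨K, hK, hKA, hc'⟩ := rSet_exists' hE (M := M) A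
      rw [← hc']
      have h1 : K \ {a, sstar a} ⊆ x := by
        intro y hy
        rcases (hmemA y).1 (hKA hy.1) with h | h | h
        · exact absurd h (fun h' => hy.2 (by simp [h']))
        · exact absurd h (fun h' => hy.2 (by simp [h']))
        · exact h
      have h2 : (K \ {a, sstar a}).ncard ≤ M.rSet x := le_rSet hE (hK.subset Set.diff_subset) h1
      have h3 : K.ncard ≤ (K \ {a, sstar a}).ncard + 2 := by
        have hsub : K ⊆ (K \ {a, sstar a}) ∪ {a, sstar a} := by
          intro y hy
          by_cases h : y ∈ ({a, sstar a} : Set (J n))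
          · exact Or.inr h
          · exact Or.inl ⟨hy, h⟩
        calc K.ncard ≤ ((K \ {a, sstar a}) ∪ {a, sstar a}).ncard :=
              Set.ncard_le_ncard hsub (Set.toFinite _)
          _ ≤ (K \ {a, sstar a}).ncard + ({a, sstar a} : Set (J n)).ncard :=
              Set.ncard_union_le _ _
          _ ≤ (K \ {a, sstar a}).ncard + 2 := by
              have := Set.ncard_insert_le a ({sstar a} : Set (J n))
              simp only [Set.ncard_singleton] at this
              omega
      omega
    · -- build an independent set of size r + 2 inside A
      obtain ⟨I0, hI0, hI0x, hc0, hsp0⟩ := rSet_exists hE (M := M) x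
      have hclI0 : M.closure I0 = x := by
        refine subset_antisymm ?_ hsp0
        rw [← hxcl]
        exact M.closure_subset_closure hI0x
      have haI0 : a ∉ I0 := fun h => ha (hI0x h)
      have hins : M.Indep (insert a I0) := by
        rw [hI0.insert_indep_iff_of_notMem haI0]
        exact ⟨by simp [hE], by rwa [hclI0]⟩
      have hclins : M.closure (insert a I0) = M.closure (insert a x) := by
        conv_rhs => rw [← hclI0]
        rw [M.closure_insert_closure_eq_closure_insert]
      have hasins : sstar a ∉ insert a I0 := by
        rintro (h | h)
        · exact sstar_ne a h
        · exact ha' (hI0x h)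
      have hins2 : M.Indep (insert (sstar a) (insert a I0)) := by
        rw [hins.insert_indep_iff_of_notMem hasins]
        exact ⟨by simp [hE], by rwa [hclins]⟩
      have hsub2 : insert (sstar a) (insert a I0) ⊆ A := by
        intro y hy
        rw [hmemA y]
        rcases hy with h | h | h
        · exact Or.inr (Or.inl h)
        · exact Or.inl h
        · exact Or.inr (Or.inr (hI0x h))
      have hcard : (insert (sstar a) (insert a I0)).ncard = r + 2 := by
        rw [Set.ncard_insert_of_notMem hasins (Set.toFinite _),
          Set.ncard_insert_of_notMem haI0 (Set.toFinite _), hc0, ← hr]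
      have := le_rSet hE hins2 hsub2
      omega
  -- apply the admissible rank axiom at A
  have hSup := hax A
  have hSne : {v : ℕ | ∃ I : Set (J n), M.Indep I ∧ Admissible I ∧ I ⊆ A ∧
      v = if ∃ b, b ∈ A ∧ sstar b ∈ A ∧ (I ∪ {b}) ∈ Iad M ∧ (I ∪ {sstar b}) ∈ Iad M
          then I.ncard + 2 else I.ncard}.Nonempty :=
    ⟨_, ∅, M.empty_indep, adm_empty, Set.empty_subset _, rfl⟩
  have hSbdd : BddAbove {v : ℕ | ∃ I : Set (J n), M.Indep I ∧ Admissible I ∧ I ⊆ A ∧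
      v = if ∃ b, b ∈ A ∧ sstar b ∈ A ∧ (I ∪ {b}) ∈ Iad M ∧ (I ∪ {sstar b}) ∈ Iad M
          then I.ncard + 2 else I.ncard} := by
    refine ⟨Fintype.card (J n) + 2, ?_⟩
    rintro v ⟨I, -, -, -, rfl⟩
    have : I.ncard ≤ Fintype.card (J n) :=
      le_trans (Set.ncard_le_ncard (Set.subset_univ I) Set.finite_univ)
        (by simp [Set.ncard_univ])
    split <;> omega
  have hmem : M.rSet A ∈ {v : ℕ | ∃ I : Set (J n), M.Indep I ∧ Admissible I ∧ I ⊆ A ∧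
      v = if ∃ b, b ∈ A ∧ sstar b ∈ A ∧ (I ∪ {b}) ∈ Iad M ∧ (I ∪ {sstar b}) ∈ Iad M
          then I.ncard + 2 else I.ncard} := by
    rw [hSup]
    exact Nat.sSup_mem hSne hSbdd
  obtain ⟨I, hI, hIadm, hIA, hIv⟩ := hmem
  rw [hrA] at hIv
  -- the pair condition must hold
  by_cases hcond : ∃ b, b ∈ A ∧ sstar b ∈ A ∧ (I ∪ {b}) ∈ Iad M ∧ (I ∪ {sstar b}) ∈ Iad M
  case neg =>
    rw [if_neg hcond] at hIv
    -- |I| ≤ r + 1, contradiction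
    exfalso
    have hIle : I.ncard ≤ r + 1 := by
      by_cases haI : a ∈ I
      · have : I ⊆ insert a x := by
          intro y hy
          rcases (hmemA y).1 (hIA hy) with h | h | h
          · exact Or.inl h
          · exact absurd (h ▸ hy) (fun h' => (adm_iff.1 hIadm) a haI h')
          · exact Or.inr h
        rw [← hra]
        exact le_rSet hE hI this
      · have : I ⊆ insert (sstar a) x := by
          intro y hy
          rcases (hmemA y).1 (hIA hy) with h | h | h
          · exact absurd (h ▸ hy) haI
          · exact Or.inl h
          · exact Or.inr h
        rw [← hra']
        exact le_rSet hE hI this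
    omega
  case pos =>
    rw [if_pos hcond] at hIv
    obtain ⟨b, hbA, hbA', hb1, hb2⟩ := hcond
    -- the only pair in A is {a, a*}
    have hbx : b ∉ x := by
      intro hbx
      rcases (hmemA (sstar b)).1 hbA' with h | h | h
      · have hb : b = sstar a := by rw [← h, sstar_sstar]
        exact ha' (hb ▸ hbx)
      · have hb : b = a := by
          have := congrArg sstar h
          rwa [sstar_sstar, sstar_sstar] at this
        exact ha (hb ▸ hbx)
      · exact (adm_iff.1 hxadm) b hbx h
    have hbcase : b = a ∨ b = sstar a := by
      rcases (hmemA b).1 hbA with h | h | h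
      · exact Or.inl h
      · exact Or.inr h
      · exact absurd h hbx
    -- in either case, both I ∪ {a} and I ∪ {a*} are in Iad M
    have hkey : (I ∪ {a}) ∈ Iad M ∧ (I ∪ {sstar a}) ∈ Iad M := by
      rcases hbcase with rfl | rfl
      · exact ⟨hb1, hb2⟩
      · rw [sstar_sstar] at hb2
        exact ⟨hb2, hb1⟩
    obtain ⟨⟨hIa, hIaadm⟩, ⟨hIas, hIasadm⟩⟩ := hkey
    -- a ∉ I and a* ∉ I
    have haI : a ∉ I := by
      intro h
      refine (adm_iff.1 hIasadm) a ?_ ?_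
      · exact subset_closure' hE _ (Or.inl h)
      · exact subset_closure' hE _ (Or.inr rfl)
    have hasI : sstar a ∉ I := by
      intro h
      refine (adm_iff.1 hIaadm) a ?_ ?_
      · exact subset_closure' hE _ (Or.inr rfl)
      · exact subset_closure' hE _ (Or.inl h)
    have hIx : I ⊆ x := by
      intro y hy
      rcases (hmemA y).1 (hIA hy) with h | h | h
      · exact absurd (h ▸ hy) haI
      · exact absurd (h ▸ hy) hasI
      · exact h
    -- |I| = r, so I spans x
    have hIr : I.ncard = r := by omega
    have hspx : x ⊆ M.closure I := spanning_of_ncard hE x hI hIx (by omega)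
    have hclIx : M.closure I = x := by
      refine subset_antisymm ?_ hspx
      rw [← hxcl]
      exact M.closure_subset_closure hIx
    -- conclude
    have : M.closure (I ∪ {sstar a}) = M.closure (insert (sstar a) x) := by
      rw [Set.union_singleton]
      conv_rhs => rw [← hclIx]
      rw [M.closure_insert_closure_eq_closure_insert]
    rwa [this] at hIasadm

lemma star_lemma_iff (hM : IsAdmissibleMatroid M) {x : Set (J n)} (hx : M.IsFlat x) {a : J n}
    (ha : a ∉ x) (ha' : sstar a ∉ x) :
    Admissible (M.closure (insert a x)) ↔ Admissible (M.closure (insert (sstar a) x)) := by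
  constructor
  · exact star_lemma hM hx ha ha'
  · intro h
    have := star_lemma hM hx ha' (by rwa [sstar_sstar]) h
    rwa [sstar_sstar] at this

end Star
section Mob
set_option linter.unusedSectionVars false

lemma mob_sum {α : Type*} [PartialOrder α] [Fintype α] (b z : α) (hb : ∀ y, b ≤ y) :
    ∑ y ∈ Finset.univ.filter (fun y => y ≤ z), mob b y = if b = z then 1 else 0 := by
  letI : DecidableEq α := Classical.decEq α
  letI : @DecidableRel α α (· < ·) := Classical.decRel _
  letI : @DecidableRel α α (· ≤ ·) := Classical.decRel _
  letI := Fintype.toLocallyFiniteOrder (α := α)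
  have h := IncidenceAlgebra.sum_Icc_mu_right (𝕜 := ℤ) (a := b) (b := z)
  have hIcc : Finset.Icc b z = Finset.univ.filter (fun y => y ≤ z) := by
    ext y
    simp [Finset.mem_Icc, hb y]
  rw [hIcc] at h
  convert h using 2
  rfl

variable {n : ℕ} {M : Matroid (J n)}

lemma muFlats_eq (h0 : M.IsFlat (∅ : Set (J n))) {x : Set (J n)} (hx : M.IsFlat x) :
    muFlats M ∅ x = mob (⟨∅, h0⟩ : {X : Set (J n) // M.IsFlat X}) ⟨x, hx⟩ := by
  rw [muFlats, dif_pos ⟨h0, hx⟩]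

lemma mu_zeta_flats (hM : IsAdmissibleMatroid M) {z : Set (J n)} (hz : M.IsFlat z) :
    ∑ x ∈ Finset.univ.filter (fun x : Set (J n) => M.IsFlat x ∧ x ⊆ z), muFlats M ∅ x
      = if (∅ : Set (J n)) = z then 1 else 0 := by
  have h0 : M.IsFlat (∅ : Set (J n)) := flat_empty hM
  have hmob := mob_sum (α := {X : Set (J n) // M.IsFlat X}) ⟨∅, h0⟩ ⟨z, hz⟩
    (fun y => Set.empty_subset y.1)
  have htrans : ∑ y ∈ Finset.univ.filter
        (fun y : {X : Set (J n) // M.IsFlat X} => y ≤ ⟨z, hz⟩),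
        mob (⟨∅, h0⟩ : {X : Set (J n) // M.IsFlat X}) y
      = ∑ x ∈ Finset.univ.filter (fun x : Set (J n) => M.IsFlat x ∧ x ⊆ z),
        muFlats M ∅ x := by
    refine Finset.sum_bij (fun y _ => y.1) ?_ ?_ ?_ ?_
    · intro y hy
      simp only [Finset.mem_filter, Finset.mem_univ, true_and] at hy ⊢
      exact ⟨y.2, hy⟩
    · intro y1 h1 y2 h2 h
      exact Subtype.ext h
    · intro x hx
      simp only [Finset.mem_filter, Finset.mem_univ, true_and] at hx
      exact ⟨⟨x, hx.1⟩, by simp only [Finset.mem_filter, Finset.mem_univ, true_and]; exact hx.2, rfl⟩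
    · intro y hy
      rw [muFlats_eq h0 y.2]
  rw [← htrans, hmob]
  by_cases h : (∅ : Set (J n)) = z
  · rw [if_pos h, if_pos (Subtype.ext h)]
  · rw [if_neg h, if_neg (fun h' => h (congrArg Subtype.val h'))]

lemma weisner (hM : IsAdmissibleMatroid M) (b : J n) :
    ∀ (F : Set (J n)), M.IsFlat F → b ∈ F →
      ∑ x ∈ Finset.univ.filter
          (fun x : Set (J n) => M.IsFlat x ∧ M.closure (insert b x) = F),
        muFlats M ∅ x = 0 := by
  have hE := hM.1
  suffices H : ∀ (m : ℕ) (F : Set (J n)), F.ncard = m → M.IsFlat F → b ∈ F →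
      ∑ x ∈ Finset.univ.filter
          (fun x : Set (J n) => M.IsFlat x ∧ M.closure (insert b x) = F),
        muFlats M ∅ x = 0 by
    intro F hF hbF
    exact H F.ncard F rfl hF hbF
  intro m
  induction m using Nat.strong_induction_on with
  | _ m IH =>
  intro F hcard hF hbF
  have hUnion : (Finset.univ.filter (fun y : Set (J n) => M.IsFlat y ∧ y ⊆ F ∧ b ∈ y)).biUnion
      (fun y => Finset.univ.filter
        (fun x : Set (J n) => M.IsFlat x ∧ M.closure (insert b x) = y))
      = Finset.univ.filter (fun x : Set (J n) => M.IsFlat x ∧ x ⊆ F) := by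
    ext x
    simp only [Finset.mem_biUnion, Finset.mem_filter, Finset.mem_univ, true_and]
    constructor
    · rintro ⟨y, ⟨hyF, hysub, hby⟩, hx, rfl⟩
      refine ⟨hx, ?_⟩
      exact ((Set.subset_insert b x).trans (subset_closure' hE (insert b x))).trans hysub
    · rintro ⟨hx, hxF⟩
      refine ⟨M.closure (insert b x), ⟨closure_flat' M _, ?_, ?_⟩, hx, rfl⟩
      · have hsub : insert b x ⊆ F := Set.insert_subset hbF hxF
        calc M.closure (insert b x) ⊆ M.closure F := M.closure_subset_closure hsub
          _ = F := hF.closure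
      · exact subset_closure' hE _ (Set.mem_insert b x)
  have hdisj : (↑(Finset.univ.filter
      (fun y : Set (J n) => M.IsFlat y ∧ y ⊆ F ∧ b ∈ y)) : Set (Set (J n))).PairwiseDisjoint
      (fun y => Finset.univ.filter
        (fun x : Set (J n) => M.IsFlat x ∧ M.closure (insert b x) = y)) := by
    intro y1 h1 y2 h2 hne
    simp only [Function.onFun]
    rw [Finset.disjoint_left]
    intro x hx1 hx2
    simp only [Finset.mem_filter, Finset.mem_univ, true_and] at hx1 hx2
    exact hne (hx1.2.symm.trans hx2.2)
  have hsplit : ∑ y ∈ Finset.univ.filter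
        (fun y : Set (J n) => M.IsFlat y ∧ y ⊆ F ∧ b ∈ y),
      (∑ x ∈ Finset.univ.filter
          (fun x : Set (J n) => M.IsFlat x ∧ M.closure (insert b x) = y),
        muFlats M ∅ x) = 0 := by
    rw [← Finset.sum_biUnion hdisj, hUnion, mu_zeta_flats hM hF]
    rw [if_neg (by rintro rfl; simp at hbF)]
  have hFmem : F ∈ Finset.univ.filter
      (fun y : Set (J n) => M.IsFlat y ∧ y ⊆ F ∧ b ∈ y) := by
    simp only [Finset.mem_filter, Finset.mem_univ, true_and]
    exact ⟨hF, Set.Subset.rfl, hbF⟩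
  rw [← Finset.add_sum_erase _ _ hFmem] at hsplit
  have hzero : ∑ y ∈ (Finset.univ.filter
      (fun y : Set (J n) => M.IsFlat y ∧ y ⊆ F ∧ b ∈ y)).erase F,
      (∑ x ∈ Finset.univ.filter
          (fun x : Set (J n) => M.IsFlat x ∧ M.closure (insert b x) = y),
        muFlats M ∅ x) = 0 := by
    refine Finset.sum_eq_zero ?_
    intro y hy
    rw [Finset.mem_erase, Finset.mem_filter] at hy
    obtain ⟨hne, -, hyF, hysub, hby⟩ := hy
    have hlt : y.ncard < m := by
      rw [← hcard]
      exact Set.ncard_lt_ncard (ssubset_of_ne_of_subset hne hysub) (Set.toFinite F)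
    exact IH y.ncard hlt y rfl hyF hby
  rw [hzero, add_zero] at hsplit
  exact hsplit

lemma weisner' (hM : IsAdmissibleMatroid M) (b : J n) {F : Set (J n)} (hF : M.IsFlat F)
    (hbF : b ∈ F) :
    muFlats M ∅ F = -∑ x ∈ Finset.univ.filter
        (fun x : Set (J n) => M.IsFlat x ∧ b ∉ x ∧ M.closure (insert b x) = F),
      muFlats M ∅ x := by
  have hw := weisner hM b F hF hbF
  have hTF : Finset.univ.filter
      (fun x : Set (J n) => M.IsFlat x ∧ M.closure (insert b x) = F)
      = insert F (Finset.univ.filter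
        (fun x : Set (J n) => M.IsFlat x ∧ b ∉ x ∧ M.closure (insert b x) = F)) := by
    ext x
    simp only [Finset.mem_insert, Finset.mem_filter, Finset.mem_univ, true_and]
    constructor
    · rintro ⟨hx, hcl⟩
      by_cases hbx : b ∈ x
      · left
        calc x = M.closure x := hx.closure.symm
          _ = M.closure (insert b x) := by rw [Set.insert_eq_of_mem hbx]
          _ = F := hcl
      · right; exact ⟨hx, hbx, hcl⟩
    · rintro (rfl | ⟨hx, -, hcl⟩)
      · exact ⟨hF, by rw [Set.insert_eq_of_mem hbF, hF.closure]⟩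
      · exact ⟨hx, hcl⟩
  have hnot : F ∉ Finset.univ.filter
      (fun x : Set (J n) => M.IsFlat x ∧ b ∉ x ∧ M.closure (insert b x) = F) := by
    simp only [Finset.mem_filter, Finset.mem_univ, true_and]
    rintro ⟨-, hbF', -⟩
    exact hbF' hbF
  rw [hTF, Finset.sum_insert hnot] at hw
  linarith

end Mob
section Final
set_option linter.unusedSectionVars false
variable {n : ℕ} {M : Matroid (J n)}

set_option maxHeartbeats 1600000 in
lemma sum_eq_key (hM : IsAdmissibleMatroid M) (b : J n) (k : ℕ) :
    ∑ F ∈ Finset.univ.filter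
        (fun F : Set (J n) => M.IsFlat F ∧ Admissible F ∧ M.rSet F = k ∧ b ∈ F),
      muFlats M ∅ F
    = -∑ x ∈ Finset.univ.filter
        (fun x : Set (J n) => M.IsFlat x ∧ b ∉ x ∧ Admissible (M.closure (insert b x)) ∧
          M.rSet (M.closure (insert b x)) = k),
      muFlats M ∅ x := by
  have hE := hM.1
  have h1 : ∑ F ∈ Finset.univ.filter
        (fun F : Set (J n) => M.IsFlat F ∧ Admissible F ∧ M.rSet F = k ∧ b ∈ F),
      muFlats M ∅ F
      = ∑ F ∈ Finset.univ.filter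
        (fun F : Set (J n) => M.IsFlat F ∧ Admissible F ∧ M.rSet F = k ∧ b ∈ F),
      (-∑ x ∈ Finset.univ.filter
          (fun x : Set (J n) => M.IsFlat x ∧ b ∉ x ∧ M.closure (insert b x) = F),
        muFlats M ∅ x) := by
    refine Finset.sum_congr rfl ?_
    intro F hF
    simp only [Finset.mem_filter, Finset.mem_univ, true_and] at hF
    exact weisner' hM b hF.1 hF.2.2.2
  have hdisj : (↑(Finset.univ.filter
      (fun F : Set (J n) => M.IsFlat F ∧ Admissible F ∧ M.rSet F = k ∧ b ∈ F)) :
      Set (Set (J n))).PairwiseDisjoint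
      (fun F => Finset.univ.filter
        (fun x : Set (J n) => M.IsFlat x ∧ b ∉ x ∧ M.closure (insert b x) = F)) := by
    intro y1 h1 y2 h2 hne
    simp only [Function.onFun]
    rw [Finset.disjoint_left]
    intro x hx1 hx2
    simp only [Finset.mem_filter, Finset.mem_univ, true_and] at hx1 hx2
    exact hne (hx1.2.2.symm.trans hx2.2.2)
  rw [h1, Finset.sum_neg_distrib, ← Finset.sum_biUnion hdisj]
  congr 1
  apply Finset.sum_congr ?_ (fun _ _ => rfl)
  ext x
  simp only [Finset.mem_biUnion, Finset.mem_filter, Finset.mem_univ, true_and]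
  constructor
  · rintro ⟨F, ⟨hFflat, hFadm, hFrk, hbF⟩, hx, hbx, rfl⟩
    exact ⟨hx, hbx, hFadm, hFrk⟩
  · rintro ⟨hx, hbx, hadm, hrk⟩
    exact ⟨M.closure (insert b x), ⟨closure_flat' M _, hadm, hrk,
      subset_closure' hE _ (Set.mem_insert b x)⟩, hx, hbx, rfl⟩

lemma keyset_cond_mono (hM : IsAdmissibleMatroid M) (c : J n) (k : ℕ) (x : Set (J n))
    (h : M.IsFlat x ∧ c ∉ x ∧ Admissible (M.closure (insert c x)) ∧
      M.rSet (M.closure (insert c x)) = k) :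
    M.IsFlat x ∧ sstar c ∉ x ∧ Admissible (M.closure (insert (sstar c) x)) ∧
      M.rSet (M.closure (insert (sstar c) x)) = k := by
  have hE := hM.1
  obtain ⟨hx, hcx, hadm, hrk⟩ := h
  have hc' : sstar c ∉ x := by
    intro h'
    exact (adm_iff.1 hadm) c (subset_closure' hE _ (Set.mem_insert c x))
      (subset_closure' hE _ (Set.subset_insert c x h'))
  have hadm' : Admissible (M.closure (insert (sstar c) x)) := star_lemma hM hx hcx hc' hadm
  refine ⟨hx, hc', hadm', ?_⟩
  rw [rSet_closure hE, rSet_insert hE (by rwa [hx.closure])]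
  rw [rSet_closure hE, rSet_insert hE (by rwa [hx.closure])] at hrk
  exact hrk

theorem stmt_7 (n : ℕ) (hn : 1 ≤ n) (M : Matroid (J n)) (hM : IsAdmissibleMatroid M)
    (a : J n) (k : ℕ) :
    ∑ F ∈ Finset.univ.filter
        (fun F : Set (J n) => M.IsFlat F ∧ Admissible F ∧ M.rSet F = k ∧ a ∈ F),
      muFlats M ∅ F =
    ∑ F ∈ Finset.univ.filter
        (fun F : Set (J n) => M.IsFlat F ∧ Admissible F ∧ M.rSet F = k ∧ sstar a ∈ F),
      muFlats M ∅ F := by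
  rw [sum_eq_key hM a k, sum_eq_key hM (sstar a) k]
  congr 1
  apply Finset.sum_congr ?_ (fun _ _ => rfl)
  ext x
  simp only [Finset.mem_filter, Finset.mem_univ, true_and]
  constructor
  · exact keyset_cond_mono hM a k x
  · intro h
    have := keyset_cond_mono hM (sstar a) k x h
    rwa [sstar_sstar] at this

end Final
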